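/- Let ρₙ, ρ be probability densities on (Ω,A,m) and p > 0, p ≠ 1, with ∫|ρₙ − ρ|ᵖ dm ≤ εₙ → 0. Then for all r with min(1,p) < r < max(1,p), ∫_Ω |ρₙ − ρ|ʳ dm ≤ 2^((p−r)/(p−1)) · εₙ^((r−1)/(p−1)) → 0, and consequently the Tsallis entropy S_{T,r}[ρₙ] = (1−r)⁻¹(1 − ∫ρₙʳ dm) converges to S_{T,r}[ρ]. -/

import Mathlib

open MeasureTheory Filter

section helpers
variable {Ω : Type*} [MeasurableSpace Ω] {μ : Measure Ω}

lemma memLp_of_integrable_rpow {g : Ω → ℝ} (hg : AEStronglyMeasurable g μ)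
    {a : ℝ} (ha : 0 < a) (hint : Integrable (fun x => |g x| ^ a) μ) :
    MemLp g (ENNReal.ofReal a) μ := by
  have h0 : (ENNReal.ofReal a) ≠ 0 := by simp [ENNReal.ofReal_eq_zero, not_le, ha]
  have htop : (ENNReal.ofReal a) ≠ ⊤ := ENNReal.ofReal_ne_top
  rw [← memLp_norm_rpow_iff (p := ENNReal.ofReal a) hg h0 htop, ENNReal.div_self h0 htop,
    memLp_one_iff_integrable]
  simpa [Real.norm_eq_abs, ENNReal.toReal_ofReal ha.le] using hint

lemma integral_rpow_le_interp {f : Ω → ℝ} (hf0 : ∀ x, 0 ≤ f x)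
    (hf1 : Integrable f μ) {q : ℝ} (hq : 0 < q)
    (hfq : Integrable (fun x => f x ^ q) μ) {θ : ℝ} (hθ0 : 0 < θ) (hθ1 : θ < 1) :
    ∫ x, f x ^ (θ + q * (1 - θ)) ∂μ ≤ (∫ x, f x ∂μ) ^ θ * (∫ x, f x ^ q ∂μ) ^ (1 - θ) := by
  have hθ1' : 0 < 1 - θ := by linarith
  have hconj : Real.HolderConjugate (1/θ) (1/(1-θ)) := by
    refine ⟨?_, by positivity, by positivity⟩
    rw [one_div, inv_inv, one_div, inv_inv, inv_one]; ring
  set g : Ω → ℝ := fun x => f x ^ θ with hg_def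
  set h : Ω → ℝ := fun x => f x ^ (q * (1 - θ)) with hh_def
  have hfm : AEStronglyMeasurable f μ := hf1.aestronglyMeasurable
  have hgm : AEStronglyMeasurable g μ :=
    (hfm.aemeasurable.pow aemeasurable_const).aestronglyMeasurable
  have hhm : AEStronglyMeasurable h μ :=
    (hfm.aemeasurable.pow aemeasurable_const).aestronglyMeasurable
  have hgmem : MemLp g (ENNReal.ofReal (1/θ)) μ := by
    apply memLp_of_integrable_rpow hgm (by positivity)
    have : (fun x => |g x| ^ (1/θ)) = f := by
      funext x
      rw [hg_def, abs_of_nonneg (Real.rpow_nonneg (hf0 x) _), ← Real.rpow_mul (hf0 x),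
        mul_one_div_cancel hθ0.ne', Real.rpow_one]
    rw [this]; exact hf1
  have hhmem : MemLp h (ENNReal.ofReal (1/(1-θ))) μ := by
    apply memLp_of_integrable_rpow hhm (by positivity)
    have : (fun x => |h x| ^ (1/(1-θ))) = fun x => f x ^ q := by
      funext x
      rw [hh_def, abs_of_nonneg (Real.rpow_nonneg (hf0 x) _), ← Real.rpow_mul (hf0 x)]
      congr 1
      field_simp
    rw [this]; exact hfq
  have key := integral_mul_le_Lp_mul_Lq_of_nonneg hconj
    (Eventually.of_forall fun x => Real.rpow_nonneg (hf0 x) _)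
    (Eventually.of_forall fun x => Real.rpow_nonneg (hf0 x) _) hgmem hhmem
  have e1 : ∫ x, f x ^ θ * f x ^ (q * (1 - θ)) ∂μ = ∫ x, f x ^ (θ + q * (1 - θ)) ∂μ :=
    integral_congr_ae (Eventually.of_forall fun x =>
      (Real.rpow_add' (hf0 x) (by positivity)).symm)
  have e2 : ∫ x, (f x ^ θ) ^ (1/θ) ∂μ = ∫ x, f x ∂μ :=
    integral_congr_ae (Eventually.of_forall fun x => by
      show (f x ^ θ) ^ (1/θ) = f x
      rw [← Real.rpow_mul (hf0 x), mul_one_div_cancel hθ0.ne', Real.rpow_one])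
  have e3 : ∫ x, (f x ^ (q * (1 - θ))) ^ (1/(1-θ)) ∂μ = ∫ x, f x ^ q ∂μ :=
    integral_congr_ae (Eventually.of_forall fun x => by
      show (f x ^ (q * (1 - θ))) ^ (1/(1-θ)) = f x ^ q
      rw [← Real.rpow_mul (hf0 x)]; congr 1; field_simp)
  rw [e1, e2, e3, one_div_one_div, one_div_one_div] at key
  exact key

end helpers
open scoped NNReal ENNReal

lemma real_rpow_add_le {x y s : ℝ} (hx : 0 ≤ x) (hy : 0 ≤ y) (hs0 : 0 ≤ s) (hs1 : s ≤ 1) :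
    (x + y) ^ s ≤ x ^ s + y ^ s := by
  have := NNReal.rpow_add_le_add_rpow (⟨x, hx⟩ : ℝ≥0) (⟨y, hy⟩ : ℝ≥0) hs0 hs1
  exact_mod_cast this

lemma abs_sub_rpow_le {a b : ℝ} (ha : 0 ≤ a) (hb : 0 ≤ b) {s : ℝ} (hs : 0 < s) :
    |a - b| ^ s ≤ a ^ s + b ^ s := by
  have hmax : |a - b| ≤ max a b := by
    rcases le_total a b with h | h
    · rw [abs_of_nonpos (by linarith)]
      simp only [neg_sub]
      exact (sub_le_self _ ha).trans (le_max_right a b)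
    · rw [abs_of_nonneg (by linarith)]
      exact (sub_le_self _ hb).trans (le_max_left a b)
  calc |a - b| ^ s ≤ (max a b) ^ s :=
        Real.rpow_le_rpow (abs_nonneg _) hmax hs.le
    _ ≤ a ^ s + b ^ s := by
        rcases max_cases a b with ⟨h1, _⟩ | ⟨h1, _⟩ <;> rw [h1]
        · exact le_add_of_nonneg_right (Real.rpow_nonneg hb _)
        · exact le_add_of_nonneg_left (Real.rpow_nonneg ha _)

lemma rpow_le_add_rpow {a : ℝ} (ha : 0 ≤ a) {s t u : ℝ} (hs : 0 < s) (ht : 0 < t)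
    (h1 : min s t ≤ u) (h2 : u ≤ max s t) : a ^ u ≤ a ^ s + a ^ t := by
  have hu : 0 < u := lt_of_lt_of_le (lt_min hs ht) h1
  rcases eq_or_lt_of_le ha with h0 | h0
  · rw [← h0, Real.zero_rpow hu.ne', Real.zero_rpow hs.ne', Real.zero_rpow ht.ne']
    norm_num
  rcases le_total a 1 with ha1 | ha1
  · have : a ^ u ≤ a ^ (min s t) := Real.rpow_le_rpow_of_exponent_ge h0 ha1 h1
    refine this.trans ?_
    rcases min_cases s t with ⟨h3, _⟩ | ⟨h3, _⟩ <;> rw [h3]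
    · exact le_add_of_nonneg_right (Real.rpow_nonneg ha _)
    · exact le_add_of_nonneg_left (Real.rpow_nonneg ha _)
  · have : a ^ u ≤ a ^ (max s t) := Real.rpow_le_rpow_of_exponent_le ha1 h2
    refine this.trans ?_
    rcases max_cases s t with ⟨h3, _⟩ | ⟨h3, _⟩ <;> rw [h3]
    · exact le_add_of_nonneg_right (Real.rpow_nonneg ha _)
    · exact le_add_of_nonneg_left (Real.rpow_nonneg ha _)

lemma abs_rpow_sub_rpow_le_small {a b s : ℝ} (ha : 0 ≤ a) (hb : 0 ≤ b)
    (hs0 : 0 < s) (hs1 : s ≤ 1) : |a ^ s - b ^ s| ≤ |a - b| ^ s := by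
  have key : ∀ x y : ℝ, 0 ≤ y → y ≤ x → x ^ s - y ^ s ≤ (x - y) ^ s := by
    intro x y hy hyx
    have h : x ^ s ≤ (x - y) ^ s + y ^ s := by
      calc x ^ s = ((x - y) + y) ^ s := by ring_nf
        _ ≤ (x - y) ^ s + y ^ s :=
            real_rpow_add_le (by linarith) hy hs0.le hs1
    linarith
  rcases le_total b a with h | h
  · rw [abs_of_nonneg (sub_nonneg.2 (Real.rpow_le_rpow hb h hs0.le)),
      abs_of_nonneg (sub_nonneg.2 h)]
    exact key a b hb h
  · rw [abs_sub_comm, abs_sub_comm a b,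
      abs_of_nonneg (sub_nonneg.2 (Real.rpow_le_rpow ha h hs0.le)),
      abs_of_nonneg (sub_nonneg.2 h)]
    exact key b a ha h

lemma abs_rpow_sub_rpow_le_big {a b s : ℝ} (ha : 0 ≤ a) (hb : 0 ≤ b) (hs : 1 ≤ s) :
    |a ^ s - b ^ s| ≤ s * |a - b| * (a + b) ^ (s - 1) := by
  have hs0 : (0:ℝ) < s := lt_of_lt_of_le one_pos hs
  have key : ∀ x y : ℝ, 0 ≤ y → y ≤ x → x ^ s - y ^ s ≤ s * (x - y) * (x + y) ^ (s - 1) := by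
    intro x y hy hyx
    have hx : 0 ≤ x := hy.trans hyx
    rcases eq_or_lt_of_le hx with h0 | h0
    · have hy0 : y = 0 := le_antisymm (hyx.trans h0.symm.le) hy
      rw [← h0, hy0]
      simp [Real.zero_rpow hs0.ne']
    · have hber := one_add_mul_self_le_rpow_one_add
        (s := (y - x) / x) (by rw [le_div_iff₀ h0]; linarith) hs
      have e : 1 + (y - x) / x = y / x := by field_simp; ring
      rw [e, Real.div_rpow hy hx] at hber
      have h2 : (1 + s * ((y - x) / x)) * x ^ s ≤ y ^ s :=
        (le_div_iff₀ (Real.rpow_pos_of_pos h0 s)).1 hber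
      have e2 : x ^ s / x = x ^ (s - 1) := by
        rw [Real.rpow_sub h0, Real.rpow_one]
      have h3 : x ^ s - y ^ s ≤ s * (x - y) * x ^ (s - 1) := by
        have heq : x ^ s - (1 + s * ((y - x) / x)) * x ^ s = s * (x - y) * (x ^ s / x) := by
          field_simp
          ring
        rw [e2] at heq
        linarith
      refine h3.trans ?_
      have h4 : x ^ (s - 1) ≤ (x + y) ^ (s - 1) :=
        Real.rpow_le_rpow hx (by linarith) (by linarith)
      exact mul_le_mul_of_nonneg_left h4 (by nlinarith)
  rcases le_total b a with h | h
  · rw [abs_of_nonneg (sub_nonneg.2 (Real.rpow_le_rpow hb h hs0.le)),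
      abs_of_nonneg (sub_nonneg.2 h)]
    exact key a b hb h
  · rw [abs_sub_comm, abs_sub_comm a b,
      abs_of_nonneg (sub_nonneg.2 (Real.rpow_le_rpow ha h hs0.le)),
      abs_of_nonneg (sub_nonneg.2 h)]
    rw [add_comm a b]
    exact key b a ha h

/-- If densities `ρₙ` approximate `ρ` in `Lᵖ`, then for `min 1 p < r < max 1 p`
the `Lʳ` distances converge to `0` with the explicit bound
`2^((p-r)/(p-1)) εₙ^((r-1)/(p-1))`, and the Tsallis entropies of order `r` converge. -/
theorem stmt3 {Ω : Type*} [MeasurableSpace Ω] (μ : Measure Ω)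
    (ρseq : ℕ → Ω → ℝ) (ρ : Ω → ℝ) (p : ℝ) (ε : ℕ → ℝ)
    (hp : 0 < p) (hp1 : p ≠ 1)
    (hρn0 : ∀ n x, 0 ≤ ρseq n x) (hρ0 : ∀ x, 0 ≤ ρ x)
    (hρn_int : ∀ n, Integrable (ρseq n) μ) (hρ_int : Integrable ρ μ)
    (hρn_norm : ∀ n, ∫ x, ρseq n x ∂μ = 1) (hρ_norm : ∫ x, ρ x ∂μ = 1)
    (hρnp_int : ∀ n, Integrable (fun x => ρseq n x ^ p) μ)
    (hρp_int : Integrable (fun x => ρ x ^ p) μ)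
    (hεnn : ∀ n, 0 ≤ ε n)
    (hε : ∀ n, ∫ x, |ρseq n x - ρ x| ^ p ∂μ ≤ ε n)
    (hε0 : Tendsto ε atTop (nhds 0))
    (r : ℝ) (hr1 : min 1 p < r) (hr2 : r < max 1 p) :
    (∀ n, ∫ x, |ρseq n x - ρ x| ^ r ∂μ ≤
        2 ^ ((p - r) / (p - 1)) * ε n ^ ((r - 1) / (p - 1))) ∧
    Tendsto (fun n => ∫ x, |ρseq n x - ρ x| ^ r ∂μ) atTop (nhds 0) ∧
    Tendsto (fun n => (1 - r)⁻¹ * (1 - ∫ x, ρseq n x ^ r ∂μ)) atTop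
      (nhds ((1 - r)⁻¹ * (1 - ∫ x, ρ x ^ r ∂μ))) := by
  have hr0 : 0 < r := (lt_min one_pos hp).trans hr1
  have hrmin : min 1 p ≤ r := hr1.le
  have hrmax : r ≤ max 1 p := hr2.le
  have hp1' : p - 1 ≠ 0 := sub_ne_zero.2 hp1
  -- θ facts
  have hθpos : 0 < (p - r) / (p - 1) := by
    rcases lt_or_gt_of_ne hp1 with h | h
    · have h2 : r < 1 := by rwa [max_eq_left h.le] at hr2
      have h1 : p < r := by rwa [min_eq_right h.le] at hr1
      exact div_pos_of_neg_of_neg (by linarith) (by linarith)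
    · have h1 : 1 < r := by rwa [min_eq_left h.le] at hr1
      have h2 : r < p := by rwa [max_eq_right h.le] at hr2
      exact div_pos (by linarith) (by linarith)
  have h1θpos : 0 < (r - 1) / (p - 1) := by
    rcases lt_or_gt_of_ne hp1 with h | h
    · have h2 : r < 1 := by rwa [max_eq_left h.le] at hr2
      exact div_pos_of_neg_of_neg (by linarith) (by linarith)
    · have h1 : 1 < r := by rwa [min_eq_left h.le] at hr1
      exact div_pos (by linarith) (by linarith)
  have h1θ : 1 - (p - r) / (p - 1) = (r - 1) / (p - 1) := by
    field_simp
    ring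
  have hθlt1 : (p - r) / (p - 1) < 1 := by linarith
  have hθsum : (p - r) / (p - 1) + p * (1 - (p - r) / (p - 1)) = r := by
    rw [h1θ]; field_simp; ring
  -- integrability facts
  have hfn_int : ∀ n, Integrable (fun x => |ρseq n x - ρ x|) μ :=
    fun n => ((hρn_int n).sub hρ_int).abs
  have hfn_meas : ∀ n, AEStronglyMeasurable (fun x => |ρseq n x - ρ x|) μ :=
    fun n => (hfn_int n).aestronglyMeasurable
  have hfnpow_meas : ∀ n (s : ℝ), AEStronglyMeasurable (fun x => |ρseq n x - ρ x| ^ s) μ :=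
    fun n s => ((hfn_meas n).aemeasurable.pow aemeasurable_const).aestronglyMeasurable
  have hfnp_int : ∀ n, Integrable (fun x => |ρseq n x - ρ x| ^ p) μ := by
    intro n
    refine Integrable.mono' ((hρnp_int n).add hρp_int) (hfnpow_meas n p)
      (Eventually.of_forall fun x => ?_)
    rw [Real.norm_eq_abs, abs_of_nonneg (Real.rpow_nonneg (abs_nonneg _) _)]
    exact abs_sub_rpow_le (hρn0 n x) (hρ0 x) hp
  have hfnr_int : ∀ n, Integrable (fun x => |ρseq n x - ρ x| ^ r) μ := by
    intro n
    refine Integrable.mono' ((hfn_int n).add (hfnp_int n)) (hfnpow_meas n r)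
      (Eventually.of_forall fun x => ?_)
    rw [Real.norm_eq_abs, abs_of_nonneg (Real.rpow_nonneg (abs_nonneg _) _)]
    have := rpow_le_add_rpow (abs_nonneg (ρseq n x - ρ x)) one_pos hp hrmin hrmax
    rwa [Real.rpow_one] at this
  have hρr_int : Integrable (fun x => ρ x ^ r) μ := by
    refine Integrable.mono' (hρ_int.add hρp_int)
      ((hρ_int.aemeasurable.pow aemeasurable_const).aestronglyMeasurable)
      (Eventually.of_forall fun x => ?_)
    rw [Real.norm_eq_abs, abs_of_nonneg (Real.rpow_nonneg (hρ0 x) _)]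
    have := rpow_le_add_rpow (hρ0 x) one_pos hp hrmin hrmax
    rwa [Real.rpow_one] at this
  have hρnr_int : ∀ n, Integrable (fun x => ρseq n x ^ r) μ := by
    intro n
    refine Integrable.mono' ((hρn_int n).add (hρnp_int n))
      (((hρn_int n).aemeasurable.pow aemeasurable_const).aestronglyMeasurable)
      (Eventually.of_forall fun x => ?_)
    rw [Real.norm_eq_abs, abs_of_nonneg (Real.rpow_nonneg (hρn0 n x) _)]
    have := rpow_le_add_rpow (hρn0 n x) one_pos hp hrmin hrmax
    rwa [Real.rpow_one] at this
  -- L¹ bound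
  have hint2 : ∀ n, ∫ x, |ρseq n x - ρ x| ∂μ ≤ 2 := by
    intro n
    have hmono : ∫ x, |ρseq n x - ρ x| ∂μ ≤ ∫ x, (ρseq n x + ρ x) ∂μ := by
      refine integral_mono (hfn_int n) ((hρn_int n).add hρ_int) fun x => ?_
      have := abs_sub (ρseq n x) (ρ x)
      rwa [abs_of_nonneg (hρn0 n x), abs_of_nonneg (hρ0 x)] at this
    rw [integral_add (hρn_int n) hρ_int, hρn_norm n, hρ_norm] at hmono
    linarith
  -- Part 1
  have part1 : ∀ n, ∫ x, |ρseq n x - ρ x| ^ r ∂μ ≤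
      2 ^ ((p - r) / (p - 1)) * ε n ^ ((r - 1) / (p - 1)) := by
    intro n
    have key := integral_rpow_le_interp (μ := μ) (f := fun x => |ρseq n x - ρ x|)
      (fun x => abs_nonneg _) (hfn_int n) hp (hfnp_int n) hθpos hθlt1
    rw [hθsum] at key
    refine key.trans ?_
    rw [h1θ]
    have hA : (∫ x, |ρseq n x - ρ x| ∂μ) ^ ((p - r) / (p - 1)) ≤ 2 ^ ((p - r) / (p - 1)) :=
      Real.rpow_le_rpow (integral_nonneg fun x => abs_nonneg _) (hint2 n) hθpos.le
    have hB : (∫ x, |ρseq n x - ρ x| ^ p ∂μ) ^ ((r - 1) / (p - 1)) ≤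
        ε n ^ ((r - 1) / (p - 1)) :=
      Real.rpow_le_rpow (integral_nonneg fun x => Real.rpow_nonneg (abs_nonneg _) _)
        (hε n) h1θpos.le
    exact mul_le_mul hA hB (Real.rpow_nonneg
      (integral_nonneg fun x => Real.rpow_nonneg (abs_nonneg _) _) _)
      (Real.rpow_nonneg (by norm_num) _)
  -- Part 2
  have hbt : Tendsto (fun n => 2 ^ ((p - r) / (p - 1)) * ε n ^ ((r - 1) / (p - 1)))
      atTop (nhds 0) := by
    have hcont : ContinuousAt (fun x : ℝ => x ^ ((r - 1) / (p - 1))) 0 :=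
      Real.continuousAt_rpow_const 0 _ (Or.inr h1θpos.le)
    have h1 := hcont.tendsto.comp hε0
    rw [Real.zero_rpow h1θpos.ne'] at h1
    have h2 := h1.const_mul (2 ^ ((p - r) / (p - 1)) : ℝ)
    simpa using h2
  have part2 : Tendsto (fun n => ∫ x, |ρseq n x - ρ x| ^ r ∂μ) atTop (nhds 0) :=
    squeeze_zero (fun n => integral_nonneg fun x => Real.rpow_nonneg (abs_nonneg _) _)
      part1 hbt
  refine ⟨part1, part2, ?_⟩
  -- Part 3
  have htend : Tendsto (fun n => ∫ x, ρseq n x ^ r ∂μ) atTop (nhds (∫ x, ρ x ^ r ∂μ)) := by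
    rw [tendsto_iff_norm_sub_tendsto_zero]
    rcases lt_or_gt_of_ne hp1 with hplt | hpgt
    · -- p < 1, so r < 1
      have hrlt1 : r < 1 := by rwa [max_eq_left hplt.le] at hr2
      have hb : ∀ n, ‖(∫ x, ρseq n x ^ r ∂μ) - ∫ x, ρ x ^ r ∂μ‖ ≤
          ∫ x, |ρseq n x - ρ x| ^ r ∂μ := by
        intro n
        rw [← integral_sub (hρnr_int n) hρr_int]
        refine (norm_integral_le_integral_norm _).trans ?_
        refine integral_mono (((hρnr_int n).sub hρr_int).norm) (hfnr_int n) fun x => ?_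
        rw [Real.norm_eq_abs]
        exact abs_rpow_sub_rpow_le_small (hρn0 n x) (hρ0 x) hr0 hrlt1.le
      exact squeeze_zero (fun n => norm_nonneg _) hb part2
    · -- p > 1, so 1 < r < p
      have hr1' : 1 < r := by rwa [min_eq_left hpgt.le] at hr1
      have hrp : r < p := by rwa [max_eq_right hpgt.le] at hr2
      have hr1ne : r - 1 ≠ 0 := by linarith
      have hrr : 0 < r / (r - 1) := div_pos hr0 (by linarith)
      have hconj : Real.HolderConjugate r (r / (r - 1)) := by
        refine ⟨?_, hr0, hrr⟩
        rw [inv_div, inv_one, inv_eq_one_div, ← add_div, div_eq_one_iff_eq hr0.ne']; ring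
      have hsum_pow : ∀ (s a b : ℝ), 0 < s → 0 ≤ a → 0 ≤ b →
          (a + b) ^ s ≤ 2 ^ s * (a ^ s + b ^ s) := by
        intro s a b hs ha hb
        have h1 : a + b ≤ 2 * max a b := by
          rcases max_cases a b with ⟨h, h'⟩ | ⟨h, h'⟩ <;> rw [h] <;> linarith
        have hmn : 0 ≤ max a b := le_max_of_le_left ha
        calc (a + b) ^ s ≤ (2 * max a b) ^ s :=
              Real.rpow_le_rpow (by linarith) h1 hs.le
          _ = 2 ^ s * (max a b) ^ s := Real.mul_rpow (by norm_num) hmn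
          _ ≤ 2 ^ s * (a ^ s + b ^ s) := by
              refine mul_le_mul_of_nonneg_left ?_ (Real.rpow_nonneg (by norm_num) _)
              rcases max_cases a b with ⟨h, _⟩ | ⟨h, _⟩ <;> rw [h]
              · exact le_add_of_nonneg_right (Real.rpow_nonneg hb _)
              · exact le_add_of_nonneg_left (Real.rpow_nonneg ha _)
      -- integrability of (ρn + ρ)^r
      have hgr_int : ∀ n, Integrable (fun x => (ρseq n x + ρ x) ^ r) μ := by
        intro n
        refine Integrable.mono' ((((hρnr_int n).add hρr_int)).const_mul (2 ^ r))
          ((((hρn_int n).add hρ_int).aemeasurable.pow aemeasurable_const).aestronglyMeasurable)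
          (Eventually.of_forall fun x => ?_)
        rw [Real.norm_eq_abs, abs_of_nonneg
          (Real.rpow_nonneg (add_nonneg (hρn0 n x) (hρ0 x)) _)]
        exact hsum_pow r _ _ hr0 (hρn0 n x) (hρ0 x)
      -- bound on ∫ ρn^p
      set P : ℝ := ∫ x, ρ x ^ p ∂μ with hP_def
      set C : ℝ := ∫ x, ρ x ^ r ∂μ with hC_def
      have hPnn : 0 ≤ P := integral_nonneg fun x => Real.rpow_nonneg (hρ0 x) _
      have hCnn : 0 ≤ C := integral_nonneg fun x => Real.rpow_nonneg (hρ0 x) _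
      have hρnp_bound : ∀ n, ∫ x, ρseq n x ^ p ∂μ ≤ 2 ^ p * (P + ε n) := by
        intro n
        have hmono : ∫ x, ρseq n x ^ p ∂μ ≤
            ∫ x, 2 ^ p * (ρ x ^ p + |ρseq n x - ρ x| ^ p) ∂μ := by
          refine integral_mono (hρnp_int n)
            ((hρp_int.add (hfnp_int n)).const_mul _) fun x => ?_
          have h1 : ρseq n x ≤ ρ x + |ρseq n x - ρ x| := by
            have := le_abs_self (ρseq n x - ρ x); linarith
          calc ρseq n x ^ p ≤ (ρ x + |ρseq n x - ρ x|) ^ p :=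
                Real.rpow_le_rpow (hρn0 n x) h1 hp.le
            _ ≤ 2 ^ p * (ρ x ^ p + |ρseq n x - ρ x| ^ p) :=
                hsum_pow p _ _ hp (hρ0 x) (abs_nonneg _)
        rw [integral_const_mul, integral_add hρp_int (hfnp_int n)] at hmono
        refine hmono.trans ?_
        have h2p : (0:ℝ) ≤ 2 ^ p := Real.rpow_nonneg (by norm_num) _
        exact mul_le_mul_of_nonneg_left (by linarith [hε n]) h2p
      have hρnr_bound : ∀ n, ∫ x, ρseq n x ^ r ∂μ ≤ 1 + 2 ^ p * (P + ε n) := by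
        intro n
        have hmono : ∫ x, ρseq n x ^ r ∂μ ≤ ∫ x, (ρseq n x + ρseq n x ^ p) ∂μ := by
          refine integral_mono (hρnr_int n) ((hρn_int n).add (hρnp_int n)) fun x => ?_
          have := rpow_le_add_rpow (hρn0 n x) one_pos hp hrmin hrmax
          rwa [Real.rpow_one] at this
        rw [integral_add (hρn_int n) (hρnp_int n), hρn_norm n] at hmono
        exact hmono.trans (by linarith [hρnp_bound n])
      have hsumr_bound : ∀ n, ∫ x, (ρseq n x + ρ x) ^ r ∂μ ≤
          2 ^ r * ((1 + 2 ^ p * (P + ε n)) + C) := by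
        intro n
        have hmono : ∫ x, (ρseq n x + ρ x) ^ r ∂μ ≤
            ∫ x, 2 ^ r * (ρseq n x ^ r + ρ x ^ r) ∂μ := by
          refine integral_mono (hgr_int n) (((hρnr_int n).add hρr_int).const_mul _)
            fun x => hsum_pow r _ _ hr0 (hρn0 n x) (hρ0 x)
        rw [integral_const_mul, integral_add (hρnr_int n) hρr_int] at hmono
        refine hmono.trans ?_
        have h2r : (0:ℝ) ≤ 2 ^ r := Real.rpow_nonneg (by norm_num) _
        exact mul_le_mul_of_nonneg_left (by linarith [hρnr_bound n]) h2r
      -- Hölder bound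
      set Bf : ℝ → ℝ := fun t => 2 ^ r * ((1 + 2 ^ p * (P + t)) + C) with hBf_def
      have hb : ∀ n, ‖(∫ x, ρseq n x ^ r ∂μ) - ∫ x, ρ x ^ r ∂μ‖ ≤
          r * ((∫ x, |ρseq n x - ρ x| ^ r ∂μ) ^ (1/r) * (Bf (ε n)) ^ (1/(r/(r-1)))) := by
        intro n
        have hg_meas : AEStronglyMeasurable (fun x => (ρseq n x + ρ x) ^ (r - 1)) μ :=
          (((hρn_int n).add hρ_int).aemeasurable.pow aemeasurable_const).aestronglyMeasurable
        have hmem1 : MemLp (fun x => |ρseq n x - ρ x|) (ENNReal.ofReal r) μ := by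
          refine memLp_of_integrable_rpow (hfn_meas n) hr0 ?_
          simpa [abs_abs] using hfnr_int n
        have hmem2 : MemLp (fun x => (ρseq n x + ρ x) ^ (r - 1))
            (ENNReal.ofReal (r/(r-1))) μ := by
          refine memLp_of_integrable_rpow hg_meas hrr ?_
          have heq : (fun x => |(ρseq n x + ρ x) ^ (r - 1)| ^ (r/(r-1))) =
              fun x => (ρseq n x + ρ x) ^ r := by
            funext x
            rw [abs_of_nonneg (Real.rpow_nonneg (add_nonneg (hρn0 n x) (hρ0 x)) _),
              ← Real.rpow_mul (add_nonneg (hρn0 n x) (hρ0 x))]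
            congr 1
            field_simp
          rw [heq]; exact hgr_int n
        -- integrability of the product
        have hprod : Integrable
            (fun x => |ρseq n x - ρ x| * (ρseq n x + ρ x) ^ (r - 1)) μ := by
          have he : (1 : ℝ≥0∞) / 1 = 1 / ENNReal.ofReal r + 1 / ENNReal.ofReal (r/(r-1)) := by
            rw [one_div (ENNReal.ofReal r), one_div (ENNReal.ofReal (r/(r-1))),
              ← ENNReal.ofReal_inv_of_pos hr0, ← ENNReal.ofReal_inv_of_pos hrr,
              ← ENNReal.ofReal_add (inv_nonneg.2 hr0.le) (inv_nonneg.2 hrr.le),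
              hconj.inv_add_inv_eq_one, ENNReal.ofReal_one]
            simp
          have hT : ENNReal.HolderTriple (ENNReal.ofReal r) (ENNReal.ofReal (r/(r-1))) 1 := by
            refine ⟨?_⟩
            simp only [one_div, inv_one] at he
            rw [inv_one]; exact he.symm
          have := (hmem2.smul hmem1 (hpqr := hT))
          rw [memLp_one_iff_integrable] at this
          · simpa [smul_eq_mul, mul_comm, Pi.mul_def] using this
        have hH := integral_mul_le_Lp_mul_Lq_of_nonneg hconj
          (Eventually.of_forall fun x => abs_nonneg (ρseq n x - ρ x))
          (Eventually.of_forall fun x =>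
            Real.rpow_nonneg (add_nonneg (hρn0 n x) (hρ0 x)) _) hmem1 hmem2
        have heq2 : ∫ x, ((ρseq n x + ρ x) ^ (r - 1)) ^ (r/(r-1)) ∂μ =
            ∫ x, (ρseq n x + ρ x) ^ r ∂μ := by
          refine integral_congr_ae (Eventually.of_forall fun x => ?_)
          show ((ρseq n x + ρ x) ^ (r - 1)) ^ (r/(r-1)) = (ρseq n x + ρ x) ^ r
          rw [← Real.rpow_mul (add_nonneg (hρn0 n x) (hρ0 x))]
          congr 1
          field_simp
        have heq3 : ∫ x, (|ρseq n x - ρ x|) ^ r ∂μ = ∫ x, |ρseq n x - ρ x| ^ r ∂μ := rfl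
        rw [heq2] at hH
        -- main chain
        rw [← integral_sub (hρnr_int n) hρr_int]
        calc ‖∫ x, (ρseq n x ^ r - ρ x ^ r) ∂μ‖
            ≤ ∫ x, ‖ρseq n x ^ r - ρ x ^ r‖ ∂μ := norm_integral_le_integral_norm _
          _ ≤ ∫ x, r * (|ρseq n x - ρ x| * (ρseq n x + ρ x) ^ (r - 1)) ∂μ := by
              refine integral_mono (((hρnr_int n).sub hρr_int).norm)
                (hprod.const_mul r) fun x => ?_
              rw [Real.norm_eq_abs]
              have := abs_rpow_sub_rpow_le_big (hρn0 n x) (hρ0 x) hr1'.le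
              calc |ρseq n x ^ r - ρ x ^ r|
                  ≤ r * |ρseq n x - ρ x| * (ρseq n x + ρ x) ^ (r - 1) := this
                _ = r * (|ρseq n x - ρ x| * (ρseq n x + ρ x) ^ (r - 1)) := by ring
          _ = r * ∫ x, |ρseq n x - ρ x| * (ρseq n x + ρ x) ^ (r - 1) ∂μ :=
              integral_const_mul r _
          _ ≤ r * ((∫ x, |ρseq n x - ρ x| ^ r ∂μ) ^ (1/r) *
              (∫ x, (ρseq n x + ρ x) ^ r ∂μ) ^ (1/(r/(r-1)))) :=
              mul_le_mul_of_nonneg_left hH hr0.le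
          _ ≤ r * ((∫ x, |ρseq n x - ρ x| ^ r ∂μ) ^ (1/r) * (Bf (ε n)) ^ (1/(r/(r-1)))) := by
              refine mul_le_mul_of_nonneg_left ?_ hr0.le
              refine mul_le_mul_of_nonneg_left ?_
                (Real.rpow_nonneg (integral_nonneg fun x =>
                  Real.rpow_nonneg (abs_nonneg _) _) _)
              exact Real.rpow_le_rpow (integral_nonneg fun x =>
                Real.rpow_nonneg (add_nonneg (hρn0 n x) (hρ0 x)) _) (hsumr_bound n)
                (one_div_pos.2 hrr).le
      -- tendsto of the bound
      have hBf0pos : 0 < Bf 0 := by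
        rw [hBf_def]
        have h2r : (0:ℝ) < 2 ^ r := Real.rpow_pos_of_pos (by norm_num) _
        have h2p : (0:ℝ) ≤ 2 ^ p := Real.rpow_nonneg (by norm_num) _
        have : (0:ℝ) < (1 + 2 ^ p * (P + 0)) + C := by positivity
        positivity
      have hT1 : Tendsto (fun n => (∫ x, |ρseq n x - ρ x| ^ r ∂μ) ^ (1/r)) atTop (nhds 0) := by
        have hcont : ContinuousAt (fun x : ℝ => x ^ (1/r)) 0 :=
          Real.continuousAt_rpow_const 0 _ (Or.inr (by positivity))
        have h1 := hcont.tendsto.comp part2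
        rwa [Real.zero_rpow (by positivity : (1:ℝ)/r ≠ 0)] at h1
      have hT2 : Tendsto (fun n => (Bf (ε n)) ^ (1/(r/(r-1)))) atTop
          (nhds ((Bf 0) ^ (1/(r/(r-1))))) := by
        have hBfc : Continuous Bf := by
          rw [hBf_def]; fun_prop
        have hcont : ContinuousAt (fun t : ℝ => (Bf t) ^ (1/(r/(r-1)))) 0 :=
          (Real.continuousAt_rpow_const (Bf 0) _ (Or.inl hBf0pos.ne')).comp
            hBfc.continuousAt
        exact hcont.tendsto.comp hε0
      have hD : Tendsto (fun n => r * ((∫ x, |ρseq n x - ρ x| ^ r ∂μ) ^ (1/r) *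
          (Bf (ε n)) ^ (1/(r/(r-1))))) atTop (nhds 0) := by
        have := (hT1.mul hT2).const_mul r
        simpa using this
      exact squeeze_zero (fun n => norm_nonneg _) hb hD
  exact (tendsto_const_nhds.sub htend).const_mul _
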